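/- In the clock-gadget setting with clock dimension n ≥ 2 (no proportionality conditions assumed), let V = ∑_{i=0}^{n−1} (W_i† + W_i), S^ℓ = (−1)^ℓ P₁ for integers ℓ ≥ 1 and S^0 = −P₀, and 𝒰^{(m)} = ∑_{(ℓ₁,…,ℓ_m) ∈ 𝒫_m} S^{ℓ₁} V S^{ℓ₂} V ⋯ S^{ℓ_m} V P₀. Then for every m ≥ 1 the operator norm satisfies ‖𝒰^{(m)}‖ ≤ (16 · max_{0≤i≤n−1} ‖M_i‖)^m. -/

import Mathlib

open Matrix Kronecker BigOperators

noncomputable section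

variable {S : Type*} [Fintype S] [DecidableEq S]

/-- The ground-space projection `P₀ = Γ₀ ⊗ |0⟩⟨0|` on `H_S ⊗ ℂⁿ`. -/
def P0 (n : ℕ) [NeZero n] (Γ₀ : Matrix S S ℂ) : Matrix (S × Fin n) (S × Fin n) ℂ :=
  Γ₀ ⊗ₖ Matrix.single 0 0 1

/-- The hopping operator `Wᵢ = Mᵢ ⊗ |i⟩⟨i+1|` (clock indices taken mod `n`). -/
def Wop {n : ℕ} [NeZero n] (M : Fin n → Matrix S S ℂ) (i : Fin n) :
    Matrix (S × Fin n) (S × Fin n) ℂ :=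
  M i ⊗ₖ Matrix.single i (i + 1) 1

open scoped Classical in
/-- The set `𝒫_m` of `m`-tuples `(ℓ₁, …, ℓ_m)` of nonnegative integers with `∑ᵢ ℓᵢ = m` and
`∑_{i=1}^p ℓᵢ ≥ p` for all `p = 1, …, m-1`. (Since the total sum is `m`, every entry is at
most `m`, so the tuples form a finite set.) -/
def Pset (m : ℕ) : Finset (Fin m → ℕ) :=
  (Fintype.piFinset fun _ : Fin m => Finset.range (m + 1)).filter
    (fun ℓ => (∑ i, ℓ i) = m ∧
      ∀ p ∈ Finset.Icc 1 (m - 1),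
        p ≤ ∑ i ∈ Finset.univ.filter (fun i : Fin m => (i : ℕ) < p), ℓ i)

/-- The perturbation `V = ∑ᵢ (Wᵢ† + Wᵢ)`. -/
def Vop {n : ℕ} [NeZero n] (M : Fin n → Matrix S S ℂ) :
    Matrix (S × Fin n) (S × Fin n) ℂ :=
  ∑ i : Fin n, ((Wop M i)ᴴ + Wop M i)

/-- The reduced resolvent: `S^ℓ = (-1)^ℓ P₁` for `ℓ ≥ 1` and `S^0 = -P₀`. -/
def Sres (n : ℕ) [NeZero n] (Γ₀ : Matrix S S ℂ) (ℓ : ℕ) :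
    Matrix (S × Fin n) (S × Fin n) ℂ :=
  if ℓ = 0 then -(P0 n Γ₀) else ((-1 : ℂ)) ^ ℓ • (1 - P0 n Γ₀)

/-- The `m`-th order term `𝒰^{(m)} = ∑_{ℓ ∈ 𝒫_m} S^{ℓ₁} V S^{ℓ₂} V ⋯ S^{ℓ_m} V P₀` of
Bloch's perturbation series. -/
def Uop (n : ℕ) [NeZero n] (Γ₀ : Matrix S S ℂ) (M : Fin n → Matrix S S ℂ) (m : ℕ) :
    Matrix (S × Fin n) (S × Fin n) ℂ :=
  ∑ ℓ ∈ Pset m,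
    ((List.finRange m).map (fun j => Sres n Γ₀ (ℓ j) * Vop M)).prod * P0 n Γ₀

/-! ### Auxiliary lemmas -/

open scoped Matrix.Norms.L2Operator in
lemma aux_norm_proj_le_one (p : Matrix S S ℂ) (hsa : pᴴ = p) (hid : p * p = p) : ‖p‖ ≤ 1 := by
  have h : ‖p‖ * ‖p‖ = ‖p‖ := by
    conv_lhs => rw [← Matrix.l2_opNorm_conjTranspose_mul_self p]
    rw [hsa, hid]
  nlinarith [norm_nonneg p]

open scoped Matrix.Norms.L2Operator in
lemma aux_shift_norm_le {n : ℕ} [NeZero n] (M : Fin n → Matrix S S ℂ) (C : ℝ)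
    (hC : 0 ≤ C) (h : ∀ i, ‖M i‖ ≤ C) :
    ‖∑ i : Fin n, Wop M i‖ ≤ C := by
  rw [Matrix.l2_opNorm_def]
  apply ContinuousLinearMap.opNorm_le_bound _ hC
  intro x
  set A := ∑ i : Fin n, Wop M i with hA
  have hentry : ∀ s i, (A *ᵥ (WithLp.equiv 2 _ x)) (s, i)
      = (M i *ᵥ fun t => x (t, i + 1)) s := by
    intro s i
    simp only [hA, Matrix.mulVec, dotProduct, Matrix.sum_apply, Wop,
      Matrix.kroneckerMap_apply, Matrix.single, Matrix.of_apply,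
      Fintype.sum_prod_type]
    rw [Finset.sum_comm]
    rw [Fintype.sum_eq_single (i + 1)]
    · congr 1; funext t
      rw [Fintype.sum_eq_single i]
      · simp
      · intro k hk; simp [hk]
    · intro j hj
      apply Finset.sum_eq_zero
      intro t _
      rw [Finset.sum_eq_zero]
      · ring
      intro k _
      rcases eq_or_ne k i with rfl | hk
      · simp [Ne.symm hj]
      · simp [hk]
  show ‖Matrix.toEuclideanLin A x‖ ≤ C * ‖x‖
  rw [Matrix.toEuclideanLin_apply]
  have hCx : 0 ≤ C * ‖x‖ := by positivity
  rw [EuclideanSpace.norm_eq]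
  rw [show C * ‖x‖ = Real.sqrt ((C * ‖x‖) ^ 2) from (Real.sqrt_sq hCx).symm]
  apply Real.sqrt_le_sqrt
  set col : Fin n → EuclideanSpace ℂ S := fun i => (WithLp.equiv 2 _).symm (fun t => x (t, i))
    with hcol
  have hcolnorm : ∀ i, ∑ s : S, ‖x (s, i)‖ ^ 2 = ‖col i‖ ^ 2 := by
    intro i
    rw [EuclideanSpace.norm_eq, Real.sq_sqrt (by positivity)]
    rfl
  have h1 : ∀ i : Fin n, ∑ s : S, ‖(M i *ᵥ fun t => x (t, i + 1)) s‖ ^ 2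
      ≤ (C * ‖col (i + 1)‖) ^ 2 := by
    intro i
    have hb : ‖(EuclideanSpace.equiv S ℂ).symm (M i *ᵥ col (i + 1))‖
        ≤ ‖M i‖ * ‖col (i + 1)‖ := Matrix.l2_opNorm_mulVec (M i) (col (i + 1))
    have hb2 : ‖(EuclideanSpace.equiv S ℂ).symm (M i *ᵥ col (i + 1))‖
        ≤ C * ‖col (i + 1)‖ :=
      hb.trans (mul_le_mul_of_nonneg_right (h i) (norm_nonneg _))
    have heq : ∑ s : S, ‖(M i *ᵥ fun t => x (t, i + 1)) s‖ ^ 2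
        = ‖(EuclideanSpace.equiv S ℂ).symm (M i *ᵥ col (i + 1))‖ ^ 2 := by
      rw [EuclideanSpace.norm_eq, Real.sq_sqrt (by positivity)]
      rfl
    rw [heq]
    exact pow_le_pow_left₀ (norm_nonneg _) hb2 2
  calc ∑ p : S × Fin n, ‖((WithLp.equiv 2 _).symm (A *ᵥ (WithLp.equiv 2 _) x) :
        EuclideanSpace ℂ (S × Fin n)) p‖ ^ 2
      = ∑ i : Fin n, ∑ s : S, ‖(M i *ᵥ fun t => x (t, i + 1)) s‖ ^ 2 := by
        rw [Fintype.sum_prod_type, Finset.sum_comm]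
        refine Finset.sum_congr rfl fun i _ => Finset.sum_congr rfl fun s _ => ?_
        rw [show ((WithLp.equiv 2 _).symm (A *ᵥ (WithLp.equiv 2 _) x) :
          EuclideanSpace ℂ (S × Fin n)) (s, i) = (A *ᵥ (WithLp.equiv 2 _ x)) (s, i) from rfl,
          hentry]
    _ ≤ ∑ i : Fin n, (C * ‖col (i + 1)‖) ^ 2 := Finset.sum_le_sum fun i _ => h1 i
    _ = C ^ 2 * ∑ i : Fin n, ‖col (i + 1)‖ ^ 2 := by
        rw [Finset.mul_sum]; exact Finset.sum_congr rfl fun i _ => by ring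
    _ = C ^ 2 * ∑ i : Fin n, ‖col i‖ ^ 2 := by
        congr 1
        exact Fintype.sum_equiv (Equiv.addRight (1 : Fin n)) _ _ (fun i => rfl)
    _ = (C * ‖x‖) ^ 2 := by
        rw [EuclideanSpace.norm_eq (𝕜 := ℂ) x, mul_pow, Real.sq_sqrt (by positivity)]
        rw [Fintype.sum_prod_type, Finset.sum_comm]
        congr 1
        exact Finset.sum_congr rfl fun i _ => (hcolnorm i).symm

lemma aux_card_Pset (m : ℕ) (hm : 1 ≤ m) : (Pset m).card ≤ 4 ^ m := by
  classical
  set g : (Fin m → ℕ) → Multiset (Fin m) :=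
    fun ℓ => ∑ i : Fin m, Multiset.replicate (ℓ i) i with hg
  have hcount : ∀ ℓ j, Multiset.count j (g ℓ) = ℓ j := by
    intro ℓ j
    rw [hg]
    rw [show (Multiset.count j (∑ i : Fin m, Multiset.replicate (ℓ i) i))
      = ∑ i : Fin m, Multiset.count j (Multiset.replicate (ℓ i) i) from
        map_sum (Multiset.countAddMonoidHom j) _ _]
    simp [Multiset.count_replicate]
  have hinj : Set.InjOn g (Pset m) := fun a _ b _ hab =>
    funext fun j => by rw [← hcount a j, ← hcount b j, hab]
  have hcard : ∀ ℓ ∈ Pset m, Multiset.card (g ℓ) = m := by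
    intro ℓ hℓ
    have hsum : ∑ i, ℓ i = m := by
      classical
      simp only [Pset, Finset.mem_filter] at hℓ
      exact hℓ.2.1
    rw [hg, show Multiset.card (∑ i : Fin m, Multiset.replicate (ℓ i) i)
      = ∑ i : Fin m, Multiset.card (Multiset.replicate (ℓ i) i) from
        map_sum (⟨⟨Multiset.card, Multiset.card_zero⟩, Multiset.card_add⟩ :
          Multiset (Fin m) →+ ℕ) _ _]
    simpa using hsum
  rw [← Finset.card_image_of_injOn hinj]
  have hsub : (Pset m).image g ⊆
      (Finset.univ : Finset (Sym (Fin m) m)).image Sym.toMultiset := by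
    intro μ hμ
    obtain ⟨ℓ, hℓ, rfl⟩ := Finset.mem_image.mp hμ
    exact Finset.mem_image.mpr ⟨(⟨g ℓ, hcard ℓ hℓ⟩ : Sym (Fin m) m), Finset.mem_univ _, rfl⟩
  obtain ⟨k, rfl⟩ : ∃ k, m = k + 1 := ⟨m - 1, (Nat.succ_pred_eq_of_pos hm).symm⟩
  calc ((Pset (k+1)).image g).card
      ≤ _ := Finset.card_le_card hsub
    _ ≤ (Finset.univ : Finset (Sym (Fin (k+1)) (k+1))).card := Finset.card_image_le
    _ = Fintype.card (Sym (Fin (k+1)) (k+1)) := rfl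
    _ = (2 * k + 1).choose (k + 1) := by
        rw [Sym.card_sym_eq_choose, Fintype.card_fin]
        congr 1
        omega
    _ = (2 * k + 1).choose k := by
        rw [show k + 1 = 2 * k + 1 - k by omega, Nat.choose_symm (by omega)]
    _ ≤ 4 ^ k := Nat.choose_middle_le_pow k
    _ ≤ 4 ^ (k + 1) := Nat.pow_le_pow_right (by norm_num) (by omega)

open scoped Matrix.Norms.L2Operator in
lemma aux_list_prod_norm_le {n : ℕ} [NeZero n] (c : ℝ) (hc : 0 ≤ c)
    (L : List (Matrix (S × Fin n) (S × Fin n) ℂ)) (hL : ∀ a ∈ L, ‖a‖ ≤ c)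
    (B : Matrix (S × Fin n) (S × Fin n) ℂ) :
    ‖L.prod * B‖ ≤ c ^ L.length * ‖B‖ := by
  induction L with
  | nil => simp
  | cons a t ih =>
      have ht : ∀ x ∈ t, ‖x‖ ≤ c := fun x hx => hL x (List.mem_cons_of_mem a hx)
      calc ‖(a :: t).prod * B‖ = ‖a * (t.prod * B)‖ := by
            rw [List.prod_cons, mul_assoc]
        _ ≤ ‖a‖ * ‖t.prod * B‖ := norm_mul_le _ _
        _ ≤ c * (c ^ t.length * ‖B‖) :=
            mul_le_mul (hL a (List.mem_cons_self)) (ih ht) (norm_nonneg _) hc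
        _ = c ^ (a :: t).length * ‖B‖ := by
            rw [List.length_cons, pow_succ]
            ring

open scoped Matrix.Norms.L2Operator in
/-- For every `m ≥ 1`, the (ℓ²-)operator norm of `𝒰^{(m)}` is bounded by
`(16 · maxᵢ ‖Mᵢ‖)^m`. -/
theorem statement16 (n : ℕ) [NeZero n] (hn : 2 ≤ n)
    (Γ₀ : Matrix S S ℂ) (hΓproj : Γ₀ * Γ₀ = Γ₀) (hΓsa : Γ₀ᴴ = Γ₀)
    (M : Fin n → Matrix S S ℂ) (m : ℕ) (hm : 1 ≤ m) :
    ‖Uop n Γ₀ M m‖ ≤ (16 * ⨆ i : Fin n, ‖M i‖) ^ m := by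
  set C : ℝ := ⨆ i : Fin n, ‖M i‖ with hCdef
  have hbdd : BddAbove (Set.range fun i : Fin n => ‖M i‖) := Set.Finite.bddAbove (Set.finite_range _)
  have hMle : ∀ i, ‖M i‖ ≤ C := fun i => le_ciSup hbdd i
  have hC : 0 ≤ C := le_trans (norm_nonneg (M 0)) (hMle 0)
  -- P0 is a self-adjoint projection
  have hP0sa : (P0 n Γ₀)ᴴ = P0 n Γ₀ := by
    ext ⟨s, i⟩ ⟨t, j⟩
    simp only [P0, Matrix.conjTranspose_apply, Matrix.kroneckerMap_apply,
      Matrix.single, Matrix.of_apply, star_mul']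
    rw [← Matrix.conjTranspose_apply, hΓsa]
    by_cases h1 : (0 : Fin n) = i <;> by_cases h2 : (0 : Fin n) = j <;>
      simp [h1, h2] <;> aesop
  have hP0proj : P0 n Γ₀ * P0 n Γ₀ = P0 n Γ₀ := by
    rw [P0, ← Matrix.mul_kronecker_mul, hΓproj, Matrix.single_mul_single_same, mul_one]
  have hP0norm : ‖P0 n Γ₀‖ ≤ 1 := aux_norm_proj_le_one _ hP0sa hP0proj
  have hP1norm : ‖(1 : Matrix (S × Fin n) (S × Fin n) ℂ) - P0 n Γ₀‖ ≤ 1 := by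
    refine aux_norm_proj_le_one _ ?_ ?_
    · rw [Matrix.conjTranspose_sub, Matrix.conjTranspose_one, hP0sa]
    · rw [sub_mul, mul_sub, mul_sub, one_mul, mul_one, hP0proj]
      noncomm_ring
  have hSres : ∀ ℓ : ℕ, ‖Sres n Γ₀ ℓ‖ ≤ 1 := by
    intro ℓ
    rw [Sres]
    split_ifs with h
    · rw [norm_neg]; exact hP0norm
    · rw [norm_smul]
      have : ‖((-1 : ℂ)) ^ ℓ‖ = 1 := by
        rw [norm_pow, norm_neg, norm_one, one_pow]
      rw [this, one_mul]
      exact hP1norm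
  -- bound on V
  have hVop : ‖Vop M‖ ≤ 2 * C := by
    have hsum : Vop M = (∑ i : Fin n, Wop M i)ᴴ + ∑ i : Fin n, Wop M i := by
      rw [Vop, Finset.sum_add_distrib, Matrix.conjTranspose_sum]
    rw [hsum]
    have hA : ‖∑ i : Fin n, Wop M i‖ ≤ C := aux_shift_norm_le M C hC hMle
    calc ‖(∑ i : Fin n, Wop M i)ᴴ + ∑ i : Fin n, Wop M i‖
        ≤ ‖(∑ i : Fin n, Wop M i)ᴴ‖ + ‖∑ i : Fin n, Wop M i‖ := norm_add_le _ _
      _ = ‖∑ i : Fin n, Wop M i‖ + ‖∑ i : Fin n, Wop M i‖ := by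
          rw [Matrix.l2_opNorm_conjTranspose]
      _ ≤ C + C := add_le_add hA hA
      _ = 2 * C := by ring
  -- each factor
  have hfac : ∀ (ℓ : Fin m → ℕ) (j : Fin m), ‖Sres n Γ₀ (ℓ j) * Vop M‖ ≤ 2 * C := by
    intro ℓ j
    calc ‖Sres n Γ₀ (ℓ j) * Vop M‖ ≤ ‖Sres n Γ₀ (ℓ j)‖ * ‖Vop M‖ := norm_mul_le _ _
      _ ≤ 1 * (2 * C) := mul_le_mul (hSres _) hVop (norm_nonneg _)
          (by norm_num)
      _ = 2 * C := one_mul _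
  have hterm : ∀ ℓ ∈ Pset m,
      ‖((List.finRange m).map (fun j => Sres n Γ₀ (ℓ j) * Vop M)).prod * P0 n Γ₀‖
        ≤ (2 * C) ^ m := by
    intro ℓ _
    have := aux_list_prod_norm_le (2 * C) (by positivity)
      ((List.finRange m).map (fun j => Sres n Γ₀ (ℓ j) * Vop M))
      (by
        intro a ha
        obtain ⟨j, _, rfl⟩ := List.mem_map.mp ha
        exact hfac ℓ j) (P0 n Γ₀)
    rw [List.length_map, List.length_finRange] at this
    calc ‖((List.finRange m).map (fun j => Sres n Γ₀ (ℓ j) * Vop M)).prod * P0 n Γ₀‖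
        ≤ (2 * C) ^ m * ‖P0 n Γ₀‖ := this
      _ ≤ (2 * C) ^ m * 1 := by
          apply mul_le_mul_of_nonneg_left hP0norm (by positivity)
      _ = (2 * C) ^ m := mul_one _
  calc ‖Uop n Γ₀ M m‖
      ≤ ∑ ℓ ∈ Pset m,
          ‖((List.finRange m).map (fun j => Sres n Γ₀ (ℓ j) * Vop M)).prod * P0 n Γ₀‖ :=
        norm_sum_le _ _
    _ ≤ ∑ _ℓ ∈ Pset m, (2 * C) ^ m := Finset.sum_le_sum hterm
    _ = (Pset m).card * (2 * C) ^ m := by rw [Finset.sum_const, nsmul_eq_mul]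
    _ ≤ (4 : ℝ) ^ m * (2 * C) ^ m := by
        apply mul_le_mul_of_nonneg_right _ (by positivity)
        calc ((Pset m).card : ℝ) ≤ ((4 ^ m : ℕ) : ℝ) := by
              exact_mod_cast aux_card_Pset m hm
          _ = (4 : ℝ) ^ m := by push_cast; ring
    _ = (8 * C) ^ m := by rw [← mul_pow]; congr 1; ring
    _ ≤ (16 * C) ^ m := by
        apply pow_le_pow_left₀ (by positivity)
        nlinarith
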